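/- Let ζ lie on the interval [−e^{iπ/4}/√2, e^{iπ/4}/√2] (i.e., ζ = ±|ζ|e^{iπ/4}) and let z = ζ ± |z−ζ|e^{i3π/4} lie on the normal to this interval at ζ. Then dist(z², [0, i/2]) = 2|ζ||z−ζ| if |z−ζ| ≤ |ζ|, and dist(z², [0, i/2]) = |ζ|² + |z−ζ|² = |z|² if |z−ζ| ≥ |ζ|. In particular, dist(z², [0,i/2]) ≥ 2|ζ||z−ζ| always holds. -/

import Mathlib

open Complex

/-- The segment `[0, i/2] = {it : t ∈ [0, 1/2]} ⊂ ℂ`. -/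
def segZeroIHalf : Set ℂ :=
  (fun t : ℝ => (t : ℂ) * Complex.I) '' Set.Icc (0 : ℝ) (1 / 2)

lemma seg_nonempty : segZeroIHalf.Nonempty :=
  ⟨0, 0, by norm_num, by simp⟩

lemma le_infDist_of (x : ℂ) {c : ℝ} (h : ∀ y ∈ segZeroIHalf, c ≤ dist x y) :
    c ≤ Metric.infDist x segZeroIHalf := by
  by_contra hlt
  push_neg at hlt
  obtain ⟨y, hy, hd⟩ := (Metric.infDist_lt_iff seg_nonempty).1 hlt
  exact absurd (h y hy) (not_le.2 hd)

lemma dist_to_seg_pt (a b t : ℝ) :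
    dist ((a : ℂ) + (b : ℂ) * Complex.I) ((t : ℂ) * Complex.I)
      = Real.sqrt (a ^ 2 + (b - t) ^ 2) := by
  rw [Complex.dist_eq]
  have : (a : ℂ) + (b : ℂ) * Complex.I - (t : ℂ) * Complex.I
      = (a : ℂ) + ((b - t : ℝ) : ℂ) * Complex.I := by push_cast; ring
  rw [this, Complex.norm_add_mul_I]

lemma segA (a b : ℝ) (hb0 : 0 ≤ b) (hb : b ≤ 1 / 2) :
    Metric.infDist ((a : ℂ) + (b : ℂ) * Complex.I) segZeroIHalf = |a| := by
  apply le_antisymm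
  · have hmem : (b : ℂ) * Complex.I ∈ segZeroIHalf := ⟨b, ⟨hb0, hb⟩, rfl⟩
    calc Metric.infDist ((a : ℂ) + (b : ℂ) * Complex.I) segZeroIHalf
        ≤ dist ((a : ℂ) + (b : ℂ) * Complex.I) ((b : ℂ) * Complex.I) :=
          Metric.infDist_le_dist_of_mem hmem
      _ = |a| := by rw [dist_to_seg_pt]; simp [Real.sqrt_sq_eq_abs]
  · apply le_infDist_of
    rintro y ⟨t, ht, rfl⟩
    rw [dist_to_seg_pt]
    calc |a| = Real.sqrt (a ^ 2) := (Real.sqrt_sq_eq_abs a).symm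
      _ ≤ Real.sqrt (a ^ 2 + (b - t) ^ 2) := Real.sqrt_le_sqrt (by nlinarith [sq_nonneg (b - t)])

lemma segB (a b : ℝ) (hb : b ≤ 0) :
    Metric.infDist ((a : ℂ) + (b : ℂ) * Complex.I) segZeroIHalf
      = Real.sqrt (a ^ 2 + b ^ 2) := by
  apply le_antisymm
  · have hmem : (0 : ℂ) ∈ segZeroIHalf := ⟨0, by norm_num, by simp⟩
    calc Metric.infDist ((a : ℂ) + (b : ℂ) * Complex.I) segZeroIHalf
        ≤ dist ((a : ℂ) + (b : ℂ) * Complex.I) (((0 : ℝ) : ℂ) * Complex.I) := by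
          simpa using Metric.infDist_le_dist_of_mem hmem
      _ = Real.sqrt (a ^ 2 + b ^ 2) := by rw [dist_to_seg_pt]; ring_nf
  · apply le_infDist_of
    rintro y ⟨t, ht, rfl⟩
    rw [dist_to_seg_pt]
    apply Real.sqrt_le_sqrt
    have h1 : b ^ 2 ≤ (b - t) ^ 2 := by nlinarith [ht.1]
    linarith

theorem dist_sq_to_segment (σ τ r d : ℝ)
    (hσ : σ = 1 ∨ σ = -1) (hτ : τ = 1 ∨ τ = -1)
    (hr0 : 0 ≤ r) (hr : r ≤ 1 / Real.sqrt 2) (hd : 0 ≤ d)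
    (ζ z : ℂ)
    (hζ : ζ = (σ : ℂ) * (r : ℂ) * Complex.exp ((Real.pi : ℂ) / 4 * Complex.I))
    (hz : z = ζ + (τ : ℂ) * (d : ℂ) * Complex.exp (3 * (Real.pi : ℂ) / 4 * Complex.I)) :
    (‖z - ζ‖ ≤ ‖ζ‖ →
      Metric.infDist (z ^ 2) segZeroIHalf = 2 * ‖ζ‖ * ‖z - ζ‖) ∧
    (‖ζ‖ ≤ ‖z - ζ‖ →
      Metric.infDist (z ^ 2) segZeroIHalf = ‖ζ‖ ^ 2 + ‖z - ζ‖ ^ 2 ∧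
      ‖ζ‖ ^ 2 + ‖z - ζ‖ ^ 2 = ‖z‖ ^ 2) ∧
    2 * ‖ζ‖ * ‖z - ζ‖ ≤ Metric.infDist (z ^ 2) segZeroIHalf := by
  -- abs values of the unit factors
  have hσ1 : |σ| = 1 := by rcases hσ with h | h <;> simp [h]
  have hτ1 : |τ| = 1 := by rcases hτ with h | h <;> simp [h]
  have hσc : (σ : ℂ) ^ 2 = 1 := by rcases hσ with h | h <;> norm_num [h]
  have hτc : (τ : ℂ) ^ 2 = 1 := by rcases hτ with h | h <;> norm_num [h]
  -- the exponentials
  set E := Complex.exp ((Real.pi : ℂ) / 4 * Complex.I) with hE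
  have habsE : ‖E‖ = 1 := by
    rw [hE]
    have : (Real.pi : ℂ) / 4 * Complex.I = ((Real.pi / 4 : ℝ) : ℂ) * Complex.I := by
      push_cast; ring
    rw [this, Complex.norm_exp_ofReal_mul_I]
  have hI : Complex.exp ((Real.pi : ℂ) / 2 * Complex.I) = Complex.I := by
    rw [Complex.exp_mul_I]
    have hc : Complex.cos ((Real.pi : ℂ) / 2) = 0 := by
      rw [show ((Real.pi : ℂ) / 2) = ((Real.pi / 2 : ℝ) : ℂ) by push_cast; ring,
        ← Complex.ofReal_cos, Real.cos_pi_div_two, Complex.ofReal_zero]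
    have hs : Complex.sin ((Real.pi : ℂ) / 2) = 1 := by
      rw [show ((Real.pi : ℂ) / 2) = ((Real.pi / 2 : ℝ) : ℂ) by push_cast; ring,
        ← Complex.ofReal_sin, Real.sin_pi_div_two, Complex.ofReal_one]
    rw [hc, hs]; ring
  have hE2 : E ^ 2 = Complex.I := by
    rw [hE, sq, ← Complex.exp_add,
      show (Real.pi : ℂ) / 4 * Complex.I + (Real.pi : ℂ) / 4 * Complex.I
        = (Real.pi : ℂ) / 2 * Complex.I by ring, hI]
  have hE3 : Complex.exp (3 * (Real.pi : ℂ) / 4 * Complex.I) = E * Complex.I := by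
    rw [show 3 * (Real.pi : ℂ) / 4 * Complex.I
        = (Real.pi : ℂ) / 4 * Complex.I + (Real.pi : ℂ) / 2 * Complex.I by ring,
      Complex.exp_add, hI, hE]
  -- rewrite z - ζ and z
  have hzζ : z - ζ = (τ : ℂ) * (d : ℂ) * (E * Complex.I) := by
    rw [hz, hE3]; ring
  have habsζ : ‖ζ‖ = r := by
    rw [hζ]
    rw [norm_mul, norm_mul, habsE, mul_one, Complex.norm_real, Complex.norm_real,
      Real.norm_eq_abs, Real.norm_eq_abs, hσ1,
      _root_.abs_of_nonneg hr0, one_mul]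
  have habszζ : ‖z - ζ‖ = d := by
    rw [hzζ]
    rw [norm_mul, norm_mul, norm_mul, habsE, Complex.norm_I, Complex.norm_real,
      Complex.norm_real, Real.norm_eq_abs, Real.norm_eq_abs, hτ1, _root_.abs_of_nonneg hd, one_mul, mul_one, mul_one]
  -- compute z²
  have hzsq : z ^ 2 = ((-(2 * σ * τ * r * d) : ℝ) : ℂ)
      + (((r ^ 2 - d ^ 2 : ℝ)) : ℂ) * Complex.I := by
    have : z = E * ((σ : ℂ) * (r : ℂ) + (τ : ℂ) * (d : ℂ) * Complex.I) := by
      rw [hz, hζ, hE3]; ring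
    rw [this]
    have : (E * ((σ : ℂ) * (r : ℂ) + (τ : ℂ) * (d : ℂ) * Complex.I)) ^ 2
        = E ^ 2 * ((σ : ℂ) ^ 2 * (r : ℂ) ^ 2
          + 2 * (σ : ℂ) * (τ : ℂ) * (r : ℂ) * (d : ℂ) * Complex.I
          + (τ : ℂ) ^ 2 * (d : ℂ) ^ 2 * Complex.I ^ 2) := by ring
    rw [this, hE2, hσc, hτc, Complex.I_sq]
    push_cast
    ring_nf
    rw [Complex.I_sq]
    ring
  -- |z|² = r² + d²
  have habsz : ‖z‖ ^ 2 = r ^ 2 + d ^ 2 := by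
    have hzE : z = E * ((σ : ℂ) * (r : ℂ) + (τ : ℂ) * (d : ℂ) * Complex.I) := by
      rw [hz, hζ, hE3]; ring
    have : ‖z‖ = ‖(σ * r : ℝ) + ((τ * d : ℝ) : ℂ) * Complex.I‖ := by
      rw [hzE, norm_mul, habsE, one_mul]
      congr 1
      push_cast; ring
    rw [this, Complex.norm_add_mul_I, Real.sq_sqrt (by positivity)]
    have hσ2 : σ ^ 2 = 1 := by rcases hσ with h' | h' <;> norm_num [h']
    have hτ2 : τ ^ 2 = 1 := by rcases hτ with h' | h' <;> norm_num [h']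
    nlinarith
  have ha : |(-(2 * σ * τ * r * d) : ℝ)| = 2 * r * d := by
    rw [abs_neg, abs_mul, abs_mul, abs_mul, abs_mul, hσ1, hτ1,
      _root_.abs_of_nonneg hr0, _root_.abs_of_nonneg hd]
    norm_num
  have hr2 : r ^ 2 ≤ 1 / 2 := by
    have h : r ^ 2 ≤ (1 / Real.sqrt 2) ^ 2 := pow_le_pow_left₀ hr0 hr 2
    have h2 : (1 / Real.sqrt 2) ^ 2 = 1 / 2 := by
      rw [div_pow, one_pow, Real.sq_sqrt (by norm_num : (0:ℝ) ≤ 2)]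
    linarith
  have key : (-(2 * σ * τ * r * d)) ^ 2 + (r ^ 2 - d ^ 2) ^ 2 = (r ^ 2 + d ^ 2) ^ 2 := by
    have hστ : (σ * τ) ^ 2 = 1 := by
      rcases hσ with h' | h' <;> rcases hτ with h'' | h'' <;> norm_num [h', h'']
    calc (-(2 * σ * τ * r * d)) ^ 2 + (r ^ 2 - d ^ 2) ^ 2
        = 4 * (σ * τ) ^ 2 * r ^ 2 * d ^ 2 + (r ^ 2 - d ^ 2) ^ 2 := by ring
      _ = (r ^ 2 + d ^ 2) ^ 2 := by rw [hστ]; ring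
  refine ⟨?_, ?_, ?_⟩
  · intro h
    rw [habsζ, habszζ] at h ⊢
    rw [hzsq, segA _ _ (by nlinarith) (by nlinarith), ha]
  · intro h
    rw [habsζ, habszζ] at h ⊢
    constructor
    · rw [hzsq, segB _ _ (by nlinarith)]
      rw [key, Real.sqrt_sq (by positivity)]
    · rw [habsz]
  · rw [habsζ, habszζ]
    rcases le_total d r with hdr | hdr
    · rw [hzsq, segA _ _ (by nlinarith) (by nlinarith), ha]
    · rw [hzsq, segB _ _ (by nlinarith)]
      rw [key, Real.sqrt_sq (by positivity)]
      nlinarith
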